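/- Under the same setup (ℓ ∈ [0,1], s_j ∈ [0,1], probability vector (p_j), γ > 0, zero-mean noise ξ with |ξ| ≤ R, J ~ p independent of ξ), the second moment satisfies E[ℓ̂²] ≤ (1+R²)/(Σ_j p_j s_j² + γ), where ℓ̂ = s_J·(s_J·ℓ + (1-s_J)·ξ)/(Σ_j p_j s_j² + γ). -/

import Mathlib

open MeasureTheory ProbabilityTheory

theorem stmt_9 {Ω : Type*} [MeasurableSpace Ω] (μ : Measure Ω)
    [IsProbabilityMeasure μ]
    (N : ℕ) (p : Fin N → ℝ) (sc : Fin N → ℝ) (ℓ γ R : ℝ)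
    (hℓ : ℓ ∈ Set.Icc (0 : ℝ) 1)
    (hp : ∀ j, 0 ≤ p j) (hpsum : ∑ j, p j = 1)
    (hsc : ∀ j, sc j ∈ Set.Icc (0 : ℝ) 1)
    (hγ : 0 < γ)
    (ξ : Ω → ℝ) (J : Ω → Fin N)
    (hξmeas : Measurable ξ) (hJmeas : Measurable J)
    (hR : 0 ≤ R) (hξbound : ∀ ω, |ξ ω| ≤ R)
    (hξmean : ∫ ω, ξ ω ∂μ = 0)
    (hJdist : ∀ j, (μ {ω | J ω = j}).toReal = p j)
    (hindep : IndepFun J ξ μ) :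
    ∫ ω, (sc (J ω) * (sc (J ω) * ℓ + (1 - sc (J ω)) * ξ ω) /
        (∑ j, p j * (sc j) ^ 2 + γ)) ^ 2 ∂μ ≤
      (1 + R ^ 2) / (∑ j, p j * (sc j) ^ 2 + γ) := by
  set D := ∑ j, p j * (sc j) ^ 2 + γ with hDdef
  have hS : ∑ j, p j * (sc j) ^ 2 ≥ 0 :=
    Finset.sum_nonneg fun j _ => mul_nonneg (hp j) (sq_nonneg _)
  have hD0 : 0 < D := by positivity
  have hR2 : 0 < 1 + R ^ 2 := by positivity
  -- pointwise bound
  have hpt : ∀ ω, (sc (J ω) * (sc (J ω) * ℓ + (1 - sc (J ω)) * ξ ω) / D) ^ 2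
      ≤ (1 + R ^ 2) * sc (J ω) ^ 2 / D ^ 2 := by
    intro ω
    rw [div_pow]
    gcongr
    obtain ⟨hs0, hs1⟩ := hsc (J ω)
    obtain ⟨hl0, hl1⟩ := hℓ
    have hx2 : (ξ ω) ^ 2 ≤ R ^ 2 := sq_le_sq' (neg_le_of_abs_le (hξbound ω)) (le_of_abs_le (hξbound ω))
    have key : (sc (J ω) * ℓ + (1 - sc (J ω)) * ξ ω) ^ 2 ≤ 1 + R ^ 2 := by
      nlinarith [mul_nonneg (mul_nonneg hs0 (sub_nonneg.2 hs1)) (sq_nonneg (ℓ - ξ ω)),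
        mul_nonneg hs0 (sq_nonneg ℓ), sq_nonneg (ξ ω), mul_nonneg hs0 (sub_nonneg.2 hx2)]
    calc (sc (J ω) * (sc (J ω) * ℓ + (1 - sc (J ω)) * ξ ω)) ^ 2
        = sc (J ω) ^ 2 * (sc (J ω) * ℓ + (1 - sc (J ω)) * ξ ω) ^ 2 := by ring
      _ ≤ sc (J ω) ^ 2 * (1 + R ^ 2) := mul_le_mul_of_nonneg_left key (sq_nonneg _)
      _ = (1 + R ^ 2) * sc (J ω) ^ 2 := by ring
  -- measurability
  have hscJ : Measurable fun ω => sc (J ω) := (measurable_of_countable sc).comp hJmeas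
  have hmeas1 : Measurable fun ω =>
      (sc (J ω) * (sc (J ω) * ℓ + (1 - sc (J ω)) * ξ ω) / D) ^ 2 := by
    apply Measurable.pow_const
    exact ((hscJ.mul ((hscJ.mul_const ℓ).add (((measurable_const.sub hscJ)).mul hξmeas)))).div_const _
  have hmeas2 : Measurable fun ω => (1 + R ^ 2) * sc (J ω) ^ 2 / D ^ 2 :=
    ((hscJ.pow_const 2).const_mul _).div_const _
  -- integrability
  have hbd2 : ∀ ω, ‖(1 + R ^ 2) * sc (J ω) ^ 2 / D ^ 2‖ ≤ (1 + R ^ 2) / D ^ 2 := by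
    intro ω
    obtain ⟨hs0, hs1⟩ := hsc (J ω)
    rw [Real.norm_eq_abs, abs_of_nonneg (by positivity)]
    apply div_le_div_of_nonneg_right ?_ (by positivity)
    nlinarith [mul_nonneg hR2.le (show (0:ℝ) ≤ 1 - sc (J ω) ^ 2 by nlinarith)]
  have hint2 : Integrable (fun ω => (1 + R ^ 2) * sc (J ω) ^ 2 / D ^ 2) μ :=
    Integrable.mono' (integrable_const ((1 + R ^ 2) / D ^ 2))
      hmeas2.aestronglyMeasurable (ae_of_all _ hbd2)
  have hint1 : Integrable (fun ω =>
      (sc (J ω) * (sc (J ω) * ℓ + (1 - sc (J ω)) * ξ ω) / D) ^ 2) μ := by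
    apply Integrable.mono' hint2 hmeas1.aestronglyMeasurable
    filter_upwards with ω
    rw [Real.norm_eq_abs, abs_of_nonneg (sq_nonneg _)]
    exact hpt ω
  -- compute ∫ sc(Jω)^2
  have hrep : ∀ ω, sc (J ω) ^ 2
      = ∑ j, Set.indicator {ω' | J ω' = j} (fun _ => sc j ^ 2) ω := by
    intro ω
    rw [Finset.sum_eq_single (J ω)]
    · simp [Set.indicator_apply]
    · intro j _ hj
      simp [Set.indicator_apply, Set.mem_setOf_eq]
      intro h; exact (hj h.symm).elim
    · simp
  have hJsum : ∫ ω, sc (J ω) ^ 2 ∂μ = ∑ j, p j * sc j ^ 2 := by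
    rw [integral_congr_ae (ae_of_all _ hrep)]
    rw [integral_finset_sum]
    · refine Finset.sum_congr rfl fun j _ => ?_
      rw [integral_indicator_const _
        (show MeasurableSet {ω' | J ω' = j} from hJmeas (measurableSet_singleton j)),
        smul_eq_mul, measureReal_def, hJdist j]
    · intro j _
      exact (integrable_const _).indicator (hJmeas (measurableSet_singleton j))
  calc ∫ ω, (sc (J ω) * (sc (J ω) * ℓ + (1 - sc (J ω)) * ξ ω) / D) ^ 2 ∂μ
      ≤ ∫ ω, (1 + R ^ 2) * sc (J ω) ^ 2 / D ^ 2 ∂μ :=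
        integral_mono hint1 hint2 hpt
    _ = (1 + R ^ 2) / D ^ 2 * ∫ ω, sc (J ω) ^ 2 ∂μ := by
        rw [← integral_const_mul]
        congr 1; ext ω; ring
    _ = (1 + R ^ 2) / D ^ 2 * ∑ j, p j * sc j ^ 2 := by rw [hJsum]
    _ ≤ (1 + R ^ 2) / D ^ 2 * D := by
        apply mul_le_mul_of_nonneg_left _ (by positivity)
        rw [hDdef]; linarith
    _ = (1 + R ^ 2) / D := by field_simp
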